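/- Let c₁ > 0 and define G_{c₁,1}(y) = c₁/2 for 0 ≤ y < c₁ and M_{n,1}(p,y) = (2p/(4ⁿ(n-1)!))(p²-y²)^{n-1}. Then for each n ≥ 1, (Lⁿ_{c₁} G_{c₁,1})(y) := ∫_y^{c₁} M_{n,1}(p,y) G_{c₁,1}(p) dp = (c₁/(2·4ⁿ n!)) (c₁² - y²)ⁿ, and hence Σ_{n=0}^∞ (Lⁿ_{c₁}G_{c₁,1})(y) = (c₁/2) e^{(c₁/2)² - (y/2)²} for y ∈ [0, c₁). -/

import Mathlib

open Real MeasureTheory intervalIntegral Set Filter Topology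

/-- `M_{n,1}(p,y) = (2p/(4ⁿ(n-1)!))(p²-y²)^{n-1}`. -/
noncomputable def MnOne (n : ℕ) (p y : ℝ) : ℝ :=
  2 * p / (4 ^ n * (Nat.factorial (n - 1))) * (p ^ 2 - y ^ 2) ^ (n - 1)

/-- `(Lⁿ_{c₁}G_{c₁,1})(y)`: for `n = 0` it is `G_{c₁,1} = c₁/2`, and for `n ≥ 1`
it is `∫_y^{c₁} M_{n,1}(p,y)·(c₁/2) dp`. -/
noncomputable def LnG (c₁ : ℝ) (n : ℕ) (y : ℝ) : ℝ :=
  if n = 0 then c₁ / 2 else ∫ p in y..c₁, MnOne n p y * (c₁ / 2)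

lemma LnG_eq (c₁ : ℝ) (n : ℕ) (hn : 1 ≤ n) (y : ℝ) :
    LnG c₁ n y = c₁ / (2 * 4 ^ n * (Nat.factorial n)) * (c₁ ^ 2 - y ^ 2) ^ n := by
  obtain ⟨m, rfl⟩ : ∃ m, n = m + 1 := ⟨n - 1, by omega⟩
  have h4 : (4 : ℝ) ^ (m + 1) ≠ 0 := by positivity
  have hf : (Nat.factorial (m + 1) : ℝ) ≠ 0 := Nat.cast_ne_zero.2 (Nat.factorial_ne_zero _)
  have hf' : (Nat.factorial m : ℝ) ≠ 0 := Nat.cast_ne_zero.2 (Nat.factorial_ne_zero _)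
  have key : ∀ p : ℝ, HasDerivAt (fun p : ℝ =>
      c₁ / (2 * 4 ^ (m + 1) * (Nat.factorial (m + 1) : ℝ)) * (p ^ 2 - y ^ 2) ^ (m + 1))
      (MnOne (m + 1) p y * (c₁ / 2)) p := by
    intro p
    have h1 : HasDerivAt (fun p : ℝ => (p ^ 2 - y ^ 2) ^ (m + 1))
        ((m + 1 : ℕ) * (p ^ 2 - y ^ 2) ^ m * (2 * p)) p := by
      have hp : HasDerivAt (fun p : ℝ => p ^ 2 - y ^ 2) (2 * p) p := by
        simpa using ((hasDerivAt_pow 2 p).sub_const (y ^ 2))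
      exact (hp.pow (m + 1)).congr_deriv (by push_cast; ring)
    have := h1.const_mul (c₁ / (2 * 4 ^ (m + 1) * (Nat.factorial (m + 1) : ℝ)))
    refine this.congr_deriv ?_
    simp only [MnOne, Nat.add_sub_cancel]
    rw [Nat.factorial_succ]
    push_cast
    field_simp
  have hcont : IntervalIntegrable (fun p => MnOne (m + 1) p y * (c₁ / 2))
      volume y c₁ := by
    apply Continuous.intervalIntegrable
    unfold MnOne; fun_prop
  rw [LnG, if_neg (by omega),
    intervalIntegral.integral_eq_sub_of_hasDerivAt (fun p _ => key p) hcont]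
  have : (y ^ 2 - y ^ 2 : ℝ) ^ (m + 1) = 0 := by simp
  ring_nf

/-- For each `n ≥ 1`, `(Lⁿ_{c₁}G_{c₁,1})(y) = (c₁/(2·4ⁿ n!)) (c₁² - y²)ⁿ`, and hence
`Σ_{n=0}^∞ (Lⁿ_{c₁}G_{c₁,1})(y) = (c₁/2) e^{(c₁/2)² - (y/2)²}` for `y ∈ [0, c₁)`. -/
theorem stmt12 (c₁ : ℝ) (hc₁ : 0 < c₁) :
    (∀ n : ℕ, 1 ≤ n → ∀ y ∈ Set.Ico (0:ℝ) c₁,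
      LnG c₁ n y = c₁ / (2 * 4 ^ n * (Nat.factorial n)) * (c₁ ^ 2 - y ^ 2) ^ n) ∧
    (∀ y ∈ Set.Ico (0:ℝ) c₁,
      ∑' n : ℕ, LnG c₁ n y = (c₁ / 2) * Real.exp ((c₁/2) ^ 2 - (y/2) ^ 2)) := by
  refine ⟨fun n hn y _ => LnG_eq c₁ n hn y, fun y _ => ?_⟩
  set x : ℝ := (c₁ ^ 2 - y ^ 2) / 4 with hx
  have heq : ∀ n : ℕ, LnG c₁ n y = (c₁ / 2) * (x ^ n / (Nat.factorial n)) := by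
    intro n
    rcases Nat.eq_zero_or_pos n with rfl | hn
    · simp [LnG]
    · rw [LnG_eq c₁ n hn y, hx, div_pow]
      have hf : (Nat.factorial n : ℝ) ≠ 0 := Nat.cast_ne_zero.2 (Nat.factorial_ne_zero _)
      have h4 : (4 : ℝ) ^ n ≠ 0 := by positivity
      field_simp
  simp only [heq]
  rw [tsum_mul_left]
  congr 1
  have : Real.exp x = ∑' n : ℕ, x ^ n / (Nat.factorial n) := by
    rw [Real.exp_eq_exp_ℝ, NormedSpace.exp_eq_tsum_div]
  rw [show (c₁/2)^2 - (y/2)^2 = x by rw [hx]; ring, this]
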